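/- Let A ∈ (C^{n,α})^{m×m}, let B : (C^{n+1,α})^m → ℂ^m be a continuous linear operator, fix t₀ ∈ [a,b], and let Y ∈ (C^{n+1,α})^{m×m} be the matriciant, i.e., the unique solution of Y'(t) = −A(t)Y(t) on [a,b] with Y(t₀) = I_m. Let [BY] be the numerical m×m matrix whose k-th column is the value of B applied to the k-th column of Y. Then the operator (L,B) : (C^{n+1,α})^m → (C^{n,α})^m × ℂ^m, y ↦ (y' + Ay, By), is invertible if and only if det[BY] ≠ 0. -/

import Mathlib

open Set Filter Topology

noncomputable def supIcc (a b : ℝ) (g : ℝ → ℂ) : ℝ :=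
  sSup ((fun t => ‖g t‖) '' Set.Icc a b)

noncomputable def cNorm (a b : ℝ) (l : ℕ) (x : ℝ → ℂ) : ℝ :=
  ∑ j ∈ Finset.range (l + 1), supIcc a b (iteratedDerivWithin j x (Set.Icc a b))

noncomputable def holderSemi (a b α : ℝ) (g : ℝ → ℂ) : ℝ :=
  sSup {r : ℝ | ∃ s ∈ Set.Icc a b, ∃ t ∈ Set.Icc a b, s ≠ t ∧ r = ‖g s - g t‖ / |s - t| ^ α}

noncomputable def holderNorm (a b : ℝ) (l : ℕ) (α : ℝ) (x : ℝ → ℂ) : ℝ :=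
  cNorm a b l x +
    (if α = 0 then 0 else holderSemi a b α (iteratedDerivWithin l x (Set.Icc a b)))

def InHolder (a b : ℝ) (l : ℕ) (α : ℝ) (x : ℝ → ℂ) : Prop :=
  ContDiffOn ℝ l x (Set.Icc a b) ∧
    (α = 0 ∨ ∃ K : ℝ, ∀ s ∈ Set.Icc a b, ∀ t ∈ Set.Icc a b,
      ‖iteratedDerivWithin l x (Set.Icc a b) s - iteratedDerivWithin l x (Set.Icc a b) t‖
        ≤ K * |s - t| ^ α)

def InHolderV (a b : ℝ) (l : ℕ) (α : ℝ) {m : ℕ} (y : ℝ → Fin m → ℂ) : Prop :=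
  ∀ i, InHolder a b l α fun t => y t i

noncomputable def holderNormV (a b : ℝ) (l : ℕ) (α : ℝ) {m : ℕ} (y : ℝ → Fin m → ℂ) : ℝ :=
  ∑ i, holderNorm a b l α fun t => y t i

def InHolderM (a b : ℝ) (l : ℕ) (α : ℝ) {m : ℕ} (A : ℝ → Matrix (Fin m) (Fin m) ℂ) : Prop :=
  ∀ i j, InHolder a b l α fun t => A t i j

noncomputable def holderNormM (a b : ℝ) (l : ℕ) (α : ℝ) {m : ℕ}
    (A : ℝ → Matrix (Fin m) (Fin m) ℂ) : ℝ :=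
  ∑ i, ∑ j, holderNorm a b l α fun t => A t i j

noncomputable def Lop (a b : ℝ) {m : ℕ} (A : ℝ → Matrix (Fin m) (Fin m) ℂ)
    (y : ℝ → Fin m → ℂ) : ℝ → Fin m → ℂ :=
  fun t i => derivWithin (fun s => y s i) (Set.Icc a b) t + (A t).mulVec (y t) i

def SolvesV (a b : ℝ) {m : ℕ} (A : ℝ → Matrix (Fin m) (Fin m) ℂ)
    (y f : ℝ → Fin m → ℂ) : Prop :=
  ∀ t ∈ Set.Icc a b, ∀ i, Lop a b A y t i = f t i

section Helpers
variable {a b α : ℝ} {l : ℕ}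

private lemma abs_sub_le_of_mem_Icc {s t : ℝ} (hs : s ∈ Set.Icc a b) (ht : t ∈ Set.Icc a b) :
    |s - t| ≤ b - a := by
  rw [abs_sub_le_iff]; constructor <;> [linarith [hs.2, ht.1]; linarith [hs.1, ht.2]]

lemma holder_of_lipschitz (hab : a < b) (hα0 : 0 ≤ α) (hα1 : α ≤ 1) {g : ℝ → ℂ} {C : ℝ}
    (hC : 0 ≤ C)
    (hlip : ∀ s ∈ Set.Icc a b, ∀ t ∈ Set.Icc a b, ‖g s - g t‖ ≤ C * |s - t|) :
    ∀ s ∈ Set.Icc a b, ∀ t ∈ Set.Icc a b,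
      ‖g s - g t‖ ≤ (C * (b - a) ^ (1 - α)) * |s - t| ^ α := by
  intro s hs t ht
  rcases eq_or_ne s t with rfl | hst
  · have h1 : (0:ℝ) ≤ (b - a) ^ (1 - α) := Real.rpow_nonneg (by linarith) _
    have h2 : (0:ℝ) ≤ |s - s| ^ α := Real.rpow_nonneg (abs_nonneg _) _
    simp only [sub_self, norm_zero]
    positivity
  · have h1 : (0:ℝ) < |s - t| := abs_pos.2 (sub_ne_zero.2 hst)
    have h2 : |s - t| ≤ b - a := abs_sub_le_of_mem_Icc hs ht
    have key : |s - t| = |s - t| ^ α * |s - t| ^ (1 - α) := by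
      rw [← Real.rpow_add h1]; simp
    calc ‖g s - g t‖ ≤ C * |s - t| := hlip s hs t ht
      _ = C * (|s - t| ^ α * |s - t| ^ (1 - α)) := by rw [← key]
      _ ≤ C * (|s - t| ^ α * (b - a) ^ (1 - α)) := by
          have := Real.rpow_le_rpow (le_of_lt h1) h2 (by linarith : (0:ℝ) ≤ 1 - α)
          have h3 : (0:ℝ) ≤ |s - t| ^ α := Real.rpow_nonneg (abs_nonneg _) _
          exact mul_le_mul_of_nonneg_left (mul_le_mul_of_nonneg_left this h3) hC
      _ = (C * (b - a) ^ (1 - α)) * |s - t| ^ α := by ring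

lemma inHolder_of_contDiffOn_succ (hab : a < b) (hα0 : 0 ≤ α) (hα1 : α ≤ 1) {x : ℝ → ℂ}
    (h : ContDiffOn ℝ (l + 1) x (Set.Icc a b)) : InHolder a b l α x := by
  have hU : UniqueDiffOn ℝ (Set.Icc a b) := uniqueDiffOn_Icc hab
  refine ⟨h.of_le (by exact_mod_cast Nat.le_succ l), Or.inr ?_⟩
  have hcont : ContinuousOn (iteratedDerivWithin (l + 1) x (Set.Icc a b)) (Set.Icc a b) :=
    h.continuousOn_iteratedDerivWithin (by norm_cast) hU
  obtain ⟨C, hC⟩ := (isCompact_Icc).exists_bound_of_continuousOn hcont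
  have hC0 : 0 ≤ C := le_trans (norm_nonneg _) (hC a ⟨le_rfl, hab.le⟩)
  have hdiff : DifferentiableOn ℝ (iteratedDerivWithin l x (Set.Icc a b)) (Set.Icc a b) :=
    h.differentiableOn_iteratedDerivWithin (by exact_mod_cast Nat.lt_succ_self l) hU
  have hbound : ∀ u ∈ Set.Icc a b,
      ‖derivWithin (iteratedDerivWithin l x (Set.Icc a b)) (Set.Icc a b) u‖ ≤ C := by
    intro u hu
    rw [← iteratedDerivWithin_succ]
    exact hC u hu
  have hlip : ∀ s ∈ Set.Icc a b, ∀ t ∈ Set.Icc a b,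
      ‖iteratedDerivWithin l x (Set.Icc a b) s - iteratedDerivWithin l x (Set.Icc a b) t‖
        ≤ C * |s - t| := by
    intro s hs t ht
    have := (convex_Icc a b).norm_image_sub_le_of_norm_derivWithin_le hdiff hbound ht hs
    simpa [Real.norm_eq_abs] using this
  exact ⟨_, holder_of_lipschitz hab hα0 hα1 hC0 hlip⟩

lemma InHolder.down (hab : a < b) (hα0 : 0 ≤ α) (hα1 : α ≤ 1) {x : ℝ → ℂ}
    (h : InHolder a b (l + 1) α x) : InHolder a b l α x :=
  inHolder_of_contDiffOn_succ hab hα0 hα1 h.1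

lemma InHolder.const (hab : a < b) (hα0 : 0 ≤ α) (hα1 : α ≤ 1) (c : ℂ) :
    InHolder a b l α (fun _ => c) :=
  inHolder_of_contDiffOn_succ hab hα0 hα1 contDiffOn_const

lemma InHolder.congr (hab : a < b) {x y : ℝ → ℂ} (h : InHolder a b l α x)
    (hxy : Set.EqOn x y (Set.Icc a b)) : InHolder a b l α y := by
  have hU : UniqueDiffOn ℝ (Set.Icc a b) := uniqueDiffOn_Icc hab
  refine ⟨h.1.congr fun t ht => (hxy ht).symm, ?_⟩
  rcases h.2 with h2 | ⟨K, hK⟩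
  · exact Or.inl h2
  · refine Or.inr ⟨K, fun s hs t ht => ?_⟩
    rw [← iteratedDerivWithin_congr hxy hs, ← iteratedDerivWithin_congr hxy ht]
    exact hK s hs t ht

lemma InHolder.add (hab : a < b) {x y : ℝ → ℂ} (hx : InHolder a b l α x)
    (hy : InHolder a b l α y) : InHolder a b l α (x + y) := by
  have hU : UniqueDiffOn ℝ (Set.Icc a b) := uniqueDiffOn_Icc hab
  refine ⟨hx.1.add hy.1, ?_⟩
  rcases hx.2 with h | ⟨Kx, hKx⟩
  · exact Or.inl h
  rcases hy.2 with h | ⟨Ky, hKy⟩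
  · exact Or.inl h
  refine Or.inr ⟨Kx + Ky, fun s hs t ht => ?_⟩
  rw [iteratedDerivWithin_add hs hU (hx.1 s hs) (hy.1 s hs), iteratedDerivWithin_add ht hU (hx.1 t ht) (hy.1 t ht)]
  calc ‖_‖ ≤ ‖iteratedDerivWithin l x (Set.Icc a b) s - iteratedDerivWithin l x (Set.Icc a b) t‖
        + ‖iteratedDerivWithin l y (Set.Icc a b) s - iteratedDerivWithin l y (Set.Icc a b) t‖ := by
          rw [show iteratedDerivWithin l x (Set.Icc a b) s + iteratedDerivWithin l y (Set.Icc a b) s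
            - (iteratedDerivWithin l x (Set.Icc a b) t + iteratedDerivWithin l y (Set.Icc a b) t)
            = (iteratedDerivWithin l x (Set.Icc a b) s - iteratedDerivWithin l x (Set.Icc a b) t)
            + (iteratedDerivWithin l y (Set.Icc a b) s - iteratedDerivWithin l y (Set.Icc a b) t)
            by ring]
          exact norm_add_le _ _
    _ ≤ Kx * |s - t| ^ α + Ky * |s - t| ^ α := add_le_add (hKx s hs t ht) (hKy s hs t ht)
    _ = (Kx + Ky) * |s - t| ^ α := by ring

lemma InHolder.neg (hab : a < b) {x : ℝ → ℂ} (hx : InHolder a b l α x) :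
    InHolder a b l α (fun t => -x t) := by
  have hU : UniqueDiffOn ℝ (Set.Icc a b) := uniqueDiffOn_Icc hab
  refine ⟨hx.1.neg, ?_⟩
  rcases hx.2 with h | ⟨K, hK⟩
  · exact Or.inl h
  refine Or.inr ⟨K, fun s hs t ht => ?_⟩
  rw [iteratedDerivWithin_fun_neg, iteratedDerivWithin_fun_neg]
  rw [neg_sub_neg, norm_sub_rev]
  exact hK s hs t ht

lemma inHolder_succ_iff (hab : a < b) {x : ℝ → ℂ} :
    InHolder a b (l + 1) α x ↔ DifferentiableOn ℝ x (Set.Icc a b) ∧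
      InHolder a b l α (derivWithin x (Set.Icc a b)) := by
  have hU : UniqueDiffOn ℝ (Set.Icc a b) := uniqueDiffOn_Icc hab
  have hcd : ContDiffOn ℝ (l + 1 : ℕ) x (Set.Icc a b) ↔
      DifferentiableOn ℝ x (Set.Icc a b) ∧
        ContDiffOn ℝ l (derivWithin x (Set.Icc a b)) (Set.Icc a b) := by
    rw [show ((l+1:ℕ) : WithTop ℕ∞) = (l : WithTop ℕ∞) + 1 by norm_cast,
      contDiffOn_succ_iff_derivWithin hU]
    simp
  constructor
  · rintro ⟨h1, h2⟩
    obtain ⟨hd, hc⟩ := hcd.1 h1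
    refine ⟨hd, hc, ?_⟩
    rcases h2 with h | ⟨K, hK⟩
    · exact Or.inl h
    refine Or.inr ⟨K, fun s hs t ht => ?_⟩
    rw [← iteratedDerivWithin_succ']
    exact hK s hs t ht
  · rintro ⟨hd, hc, h2⟩
    refine ⟨hcd.2 ⟨hd, hc⟩, ?_⟩
    rcases h2 with h | ⟨K, hK⟩
    · exact Or.inl h
    refine Or.inr ⟨K, fun s hs t ht => ?_⟩
    rw [iteratedDerivWithin_succ']
    exact hK s hs t ht

lemma InHolder.boundedOn (hab : a < b) {x : ℝ → ℂ} (hx : InHolder a b l α x) :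
    ∃ C : ℝ, 0 ≤ C ∧ ∀ t ∈ Set.Icc a b, ‖x t‖ ≤ C := by
  obtain ⟨C, hC⟩ := isCompact_Icc.exists_bound_of_continuousOn hx.1.continuousOn
  exact ⟨C, le_trans (norm_nonneg _) (hC a ⟨le_rfl, hab.le⟩), hC⟩

lemma InHolder.mul (hab : a < b) (hα0 : 0 ≤ α) (hα1 : α ≤ 1) :
    ∀ {l : ℕ} {x y : ℝ → ℂ}, InHolder a b l α x → InHolder a b l α y →
      InHolder a b l α (fun t => x t * y t) := by
  intro l
  induction l with
  | zero =>
    intro x y hx hy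
    refine ⟨hx.1.mul hy.1, ?_⟩
    rcases hx.2 with h | ⟨Kx, hKx⟩
    · exact Or.inl h
    rcases hy.2 with h | ⟨Ky, hKy⟩
    · exact Or.inl h
    obtain ⟨Cx, hCx0, hCx⟩ := hx.boundedOn hab
    obtain ⟨Cy, hCy0, hCy⟩ := hy.boundedOn hab
    refine Or.inr ⟨Cx * Ky + Cy * Kx, fun s hs t ht => ?_⟩
    simp only [iteratedDerivWithin_zero] at *
    have key : x s * y s - x t * y t = x s * (y s - y t) + (x s - x t) * y t := by ring
    have h1 : ‖x s * (y s - y t)‖ ≤ Cx * (Ky * |s - t| ^ α) := by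
      rw [norm_mul]
      exact mul_le_mul (hCx s hs) (hKy s hs t ht) (norm_nonneg _) hCx0
    have h2 : ‖(x s - x t) * y t‖ ≤ Cy * (Kx * |s - t| ^ α) := by
      rw [norm_mul, mul_comm Cy]
      exact mul_le_mul (hKx s hs t ht) (hCy t ht) (norm_nonneg _)
        (le_trans (norm_nonneg _) (hKx s hs t ht))
    calc ‖x s * y s - x t * y t‖ ≤ ‖x s * (y s - y t)‖ + ‖(x s - x t) * y t‖ := by
          rw [key]; exact norm_add_le _ _
      _ ≤ Cx * (Ky * |s - t| ^ α) + Cy * (Kx * |s - t| ^ α) := add_le_add h1 h2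
      _ = (Cx * Ky + Cy * Kx) * |s - t| ^ α := by ring
  | succ l IH =>
    intro x y hx hy
    have hU : UniqueDiffOn ℝ (Set.Icc a b) := uniqueDiffOn_Icc hab
    obtain ⟨hdx, hx'⟩ := (inHolder_succ_iff hab).1 hx
    obtain ⟨hdy, hy'⟩ := (inHolder_succ_iff hab).1 hy
    refine (inHolder_succ_iff hab).2 ⟨hdx.mul hdy, ?_⟩
    have hsum : InHolder a b l α (fun t =>
        derivWithin x (Set.Icc a b) t * y t + x t * derivWithin y (Set.Icc a b) t) := by
      have h1 := IH hx' (hy.down hab hα0 hα1)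
      have h2 := IH (hx.down hab hα0 hα1) hy'
      exact h1.add hab h2
    refine hsum.congr hab fun t ht => ?_
    exact (derivWithin_mul (hdx t ht) (hdy t ht)).symm
lemma InHolder.sub (hab : a < b) {x y : ℝ → ℂ} (hx : InHolder a b l α x)
    (hy : InHolder a b l α y) : InHolder a b l α (fun t => x t - y t) :=
  (hx.add hab (hy.neg hab)).congr hab fun t _ => by simp [sub_eq_add_neg]

lemma hasDerivWithinAt_cinv {c : ℝ → ℂ} {c' : ℂ} {s : Set ℝ} {x : ℝ}
    (hc : HasDerivWithinAt c c' s x) (hx : c x ≠ 0) :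
    HasDerivWithinAt (fun y => (c y)⁻¹) (-c' / c x ^ 2) s x := by
  have h := (hasDerivAt_inv hx).scomp_hasDerivWithinAt x hc
  have : c' • (-(c x ^ 2)⁻¹) = -c' / c x ^ 2 := by
    simp [smul_eq_mul]; field_simp
  rw [this] at h
  exact h

lemma InHolder.inv (hab : a < b) (hα0 : 0 ≤ α) (hα1 : α ≤ 1) :
    ∀ {l : ℕ} {x : ℝ → ℂ}, InHolder a b l α x → (∀ t ∈ Set.Icc a b, x t ≠ 0) →
      InHolder a b l α (fun t => (x t)⁻¹) := by
  intro l
  induction l with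
  | zero =>
    intro x hx h0
    refine ⟨hx.1.inv h0, ?_⟩
    rcases hx.2 with h | ⟨K, hK⟩
    · exact Or.inl h
    obtain ⟨u, hu, hmin⟩ := isCompact_Icc.exists_isMinOn (nonempty_Icc.2 hab.le)
      (continuous_norm.comp_continuousOn hx.1.continuousOn)
    have hδ : 0 < ‖x u‖ := norm_pos_iff.2 (h0 u hu)
    refine Or.inr ⟨‖x u‖⁻¹ * ‖x u‖⁻¹ * K, fun s hs t ht => ?_⟩
    simp only [iteratedDerivWithin_zero] at *
    have hxs := h0 s hs; have hxt := h0 t ht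
    have key : (x s)⁻¹ - (x t)⁻¹ = (x t - x s) * (x s)⁻¹ * (x t)⁻¹ := by
      field_simp
    rw [key, norm_mul, norm_mul, norm_inv, norm_inv]
    have h1 : ‖x t - x s‖ ≤ K * |s - t| ^ α := by
      rw [norm_sub_rev]
      exact hK s hs t ht
    have h2 : ‖x s‖⁻¹ ≤ ‖x u‖⁻¹ := by
      exact inv_anti₀ hδ (hmin hs)
    have h3 : ‖x t‖⁻¹ ≤ ‖x u‖⁻¹ := inv_anti₀ hδ (hmin ht)
    have hKp : (0:ℝ) ≤ K * |s - t| ^ α := le_trans (norm_nonneg _) (hK s hs t ht)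
    calc ‖x t - x s‖ * ‖x s‖⁻¹ * ‖x t‖⁻¹
        ≤ (K * |s - t| ^ α) * ‖x u‖⁻¹ * ‖x u‖⁻¹ := by
          apply mul_le_mul _ h3 (inv_nonneg.2 (norm_nonneg _))
            (by positivity)
          exact mul_le_mul h1 h2 (inv_nonneg.2 (norm_nonneg _)) hKp
      _ = ‖x u‖⁻¹ * ‖x u‖⁻¹ * K * |s - t| ^ α := by ring
  | succ l IH =>
    intro x hx h0
    have hU : UniqueDiffOn ℝ (Set.Icc a b) := uniqueDiffOn_Icc hab
    obtain ⟨hdx, hx'⟩ := (inHolder_succ_iff hab).1 hx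
    have hinv : InHolder a b l α (fun t => (x t)⁻¹) := IH (hx.down hab hα0 hα1) h0
    have hdinv : DifferentiableOn ℝ (fun t => (x t)⁻¹) (Set.Icc a b) := fun t ht =>
      (hasDerivWithinAt_cinv (hdx t ht).hasDerivWithinAt (h0 t ht)).differentiableWithinAt
    refine (inHolder_succ_iff hab).2 ⟨hdinv, ?_⟩
    have hform : InHolder a b l α
        (fun t => -derivWithin x (Set.Icc a b) t * ((x t)⁻¹ * (x t)⁻¹)) :=
      (hx'.neg hab).mul hab hα0 hα1 (hinv.mul hab hα0 hα1 hinv)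
    refine hform.congr hab fun t ht => ?_
    have hd := hasDerivWithinAt_cinv (hdx t ht).hasDerivWithinAt (h0 t ht)
    rw [hd.derivWithin (hU t ht)]
    field_simp
lemma inHolder_antideriv (hab : a < b) {x g : ℝ → ℂ}
    (hd : ∀ t ∈ Set.Icc a b, HasDerivWithinAt x (g t) (Set.Icc a b) t)
    (hg : InHolder a b l α g) : InHolder a b (l + 1) α x := by
  have hU : UniqueDiffOn ℝ (Set.Icc a b) := uniqueDiffOn_Icc hab
  refine (inHolder_succ_iff hab).2 ⟨fun t ht => (hd t ht).differentiableWithinAt, ?_⟩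
  exact hg.congr hab fun t ht => ((hd t ht).derivWithin (hU t ht)).symm

lemma InHolder.finset_sum (hab : a < b) (hα0 : 0 ≤ α) (hα1 : α ≤ 1) {ι : Type*}
    (s : Finset ι) (F : ι → ℝ → ℂ) (h : ∀ i ∈ s, InHolder a b l α (F i)) :
    InHolder a b l α (fun t => ∑ i ∈ s, F i t) := by
  classical
  induction s using Finset.cons_induction with
  | empty => simpa using InHolder.const hab hα0 hα1 0
  | cons i s hi IH =>
    have : (fun t => ∑ j ∈ Finset.cons i s hi, F j t)
        = fun t => F i t + ∑ j ∈ s, F j t := by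
      funext t; rw [Finset.sum_cons]
    rw [this]
    exact (h i (Finset.mem_cons_self i s)).add hab
      (IH fun j hj => h j (Finset.mem_cons_of_mem hj))

lemma InHolder.finset_prod (hab : a < b) (hα0 : 0 ≤ α) (hα1 : α ≤ 1) {ι : Type*}
    (s : Finset ι) (F : ι → ℝ → ℂ) (h : ∀ i ∈ s, InHolder a b l α (F i)) :
    InHolder a b l α (fun t => ∏ i ∈ s, F i t) := by
  classical
  induction s using Finset.cons_induction with
  | empty => simpa using InHolder.const hab hα0 hα1 1
  | cons i s hi IH =>
    have : (fun t => ∏ j ∈ Finset.cons i s hi, F j t)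
        = fun t => F i t * ∏ j ∈ s, F j t := by
      funext t; rw [Finset.prod_cons]
    rw [this]
    exact (h i (Finset.mem_cons_self i s)).mul hab hα0 hα1
      (IH fun j hj => h j (Finset.mem_cons_of_mem hj))

lemma inHolder_det (hab : a < b) (hα0 : 0 ≤ α) (hα1 : α ≤ 1) {m : ℕ}
    {M : ℝ → Matrix (Fin m) (Fin m) ℂ}
    (hM : ∀ i j, InHolder a b l α (fun t => M t i j)) :
    InHolder a b l α (fun t => (M t).det) := by
  have hdet : (fun t => (M t).det) = fun t => ∑ σ : Equiv.Perm (Fin m),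
      (((Equiv.Perm.sign σ : ℤ) : ℂ) * ∏ i, M t (σ i) i) := by
    funext t
    rw [Matrix.det_apply]
    congr 1
    funext σ
    simp [Units.smul_def, zsmul_eq_mul]
  rw [hdet]
  refine InHolder.finset_sum hab hα0 hα1 _ _ fun σ _ => ?_
  exact (InHolder.const hab hα0 hα1 _).mul hab hα0 hα1
    (InHolder.finset_prod hab hα0 hα1 _ _ fun i _ => hM (σ i) i)

lemma inHolder_adjugate (hab : a < b) (hα0 : 0 ≤ α) (hα1 : α ≤ 1) {m : ℕ}
    {M : ℝ → Matrix (Fin m) (Fin m) ℂ}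
    (hM : ∀ i j, InHolder a b l α (fun t => M t i j)) (i j : Fin m) :
    InHolder a b l α (fun t => (M t).adjugate i j) := by
  have : (fun t => (M t).adjugate i j)
      = fun t => ((M t).updateRow j (Pi.single i 1)).det := by
    funext t; rw [Matrix.adjugate_apply]
  rw [this]
  refine inHolder_det hab hα0 hα1 fun r s => ?_
  by_cases hr : r = j
  · subst hr
    simp only [Matrix.updateRow_self]
    exact InHolder.const hab hα0 hα1 _
  · simp only [Matrix.updateRow_ne hr]
    exact hM r s
lemma iteratedDerivWithin_zero_fun' (hab : a < b) {j : ℕ} {t : ℝ} (ht : t ∈ Set.Icc a b) :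
    iteratedDerivWithin j (fun _ : ℝ => (0:ℂ)) (Set.Icc a b) t = 0 := by
  have hU : UniqueDiffOn ℝ (Set.Icc a b) := uniqueDiffOn_Icc hab
  have h := iteratedDerivWithin_const_smul (n := j) (f := fun _ : ℝ => (0:ℂ)) ht hU (0:ℂ) contDiffWithinAt_const
  have e : ((0:ℂ) • fun _ : ℝ => (0:ℂ)) = (fun _ : ℝ => (0:ℂ)) := by funext u; simp
  rw [e] at h
  simpa using h

lemma holderNorm_of_vanishing (hab : a < b) {l : ℕ} {x : ℝ → ℂ}
    (hx : ∀ t ∈ Set.Icc a b, x t = 0) : holderNorm a b l α x = 0 := by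
  have hU : UniqueDiffOn ℝ (Set.Icc a b) := uniqueDiffOn_Icc hab
  have hx' : Set.EqOn x (fun _ => (0:ℂ)) (Set.Icc a b) := fun t ht => hx t ht
  have hiter : ∀ j : ℕ, ∀ t ∈ Set.Icc a b, iteratedDerivWithin j x (Set.Icc a b) t = 0 := by
    intro j t ht
    rw [iteratedDerivWithin_congr hx' ht]
    exact iteratedDerivWithin_zero_fun' hab ht
  have hsup : ∀ j : ℕ, supIcc a b (iteratedDerivWithin j x (Set.Icc a b)) = 0 := by
    intro j
    have himg : (fun t => ‖iteratedDerivWithin j x (Set.Icc a b) t‖) '' Set.Icc a b = {0} := by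
      apply Set.eq_singleton_iff_nonempty_unique_mem.2
      constructor
      · exact ⟨‖iteratedDerivWithin j x (Set.Icc a b) a‖,
          Set.mem_image_of_mem _ ⟨le_rfl, hab.le⟩⟩
      · rintro r ⟨t, ht, rfl⟩
        simp only [hiter j t ht, norm_zero]
    rw [supIcc, himg, csSup_singleton]
  have hc : cNorm a b l x = 0 := by
    rw [cNorm]
    exact Finset.sum_eq_zero fun j _ => hsup j
  rw [holderNorm, hc, zero_add]
  by_cases hα : α = 0
  · rw [if_pos hα]
  · rw [if_neg hα]
    have hset : {r : ℝ | ∃ s ∈ Set.Icc a b, ∃ t ∈ Set.Icc a b, s ≠ t ∧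
        r = ‖iteratedDerivWithin l x (Set.Icc a b) s - iteratedDerivWithin l x (Set.Icc a b) t‖
          / |s - t| ^ α} = {0} := by
      apply Set.eq_singleton_iff_nonempty_unique_mem.2
      constructor
      · refine ⟨0, a, ⟨le_rfl, hab.le⟩, b, ⟨hab.le, le_rfl⟩, hab.ne, ?_⟩
        rw [hiter l a ⟨le_rfl, hab.le⟩, hiter l b ⟨hab.le, le_rfl⟩]
        simp
      · rintro r ⟨s, hs, t, ht, hst, rfl⟩
        rw [hiter l s hs, hiter l t ht]
        simp
    rw [holderSemi, hset, csSup_singleton]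
lemma mulVec_norm_le {m : ℕ} (M : Matrix (Fin m) (Fin m) ℂ) (w : Fin m → ℂ) :
    ‖M.mulVec w‖ ≤ (∑ i, ∑ j, ‖M i j‖) * ‖w‖ := by
  refine (pi_norm_le_iff_of_nonneg (by positivity)).2 fun i => ?_
  have h0 : M.mulVec w i = ∑ j, M i j * w j := by
    simp [Matrix.mulVec, dotProduct]
  calc ‖M.mulVec w i‖ = ‖∑ j, M i j * w j‖ := by rw [h0]
    _ ≤ ∑ j, ‖M i j * w j‖ := norm_sum_le _ _
    _ ≤ ∑ j, ‖M i j‖ * ‖w‖ := Finset.sum_le_sum fun j _ => by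
        rw [norm_mul]
        exact mul_le_mul_of_nonneg_left (norm_le_pi_norm w j) (norm_nonneg _)
    _ = (∑ j, ‖M i j‖) * ‖w‖ := by rw [Finset.sum_mul]
    _ ≤ (∑ i, ∑ j, ‖M i j‖) * ‖w‖ := by
        apply mul_le_mul_of_nonneg_right _ (norm_nonneg _)
        exact Finset.single_le_sum
          (f := fun i => ∑ j, ‖M i j‖)
          (fun i _ => Finset.sum_nonneg fun j _ => norm_nonneg _) (Finset.mem_univ i)

lemma ode_unique {m : ℕ} (hab : a < b) {A : ℝ → Matrix (Fin m) (Fin m) ℂ}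
    (hA : ∀ i j, ContinuousOn (fun t => A t i j) (Set.Icc a b))
    {z : ℝ → Fin m → ℂ}
    (hz : ∀ t ∈ Set.Icc a b, HasDerivWithinAt z (-(A t).mulVec (z t)) (Set.Icc a b) t)
    {t₁ : ℝ} (ht₁ : t₁ ∈ Set.Icc a b) (hz1 : z t₁ = 0) :
    ∀ t ∈ Set.Icc a b, z t = 0 := by
  classical
  set cl : ℝ → ℝ := fun t => max a (min t b) with hcl
  have hclmem : ∀ t, cl t ∈ Set.Icc a b :=
    fun t => ⟨le_max_left _ _, max_le hab.le (min_le_right _ _)⟩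
  have hcleq : ∀ t ∈ Set.Icc a b, cl t = t := fun t ht => by
    simp only [hcl]
    rw [min_eq_left ht.2, max_eq_right ht.1]
  -- bound
  have hbd : ∀ i j : Fin m, ∃ C : ℝ, 0 ≤ C ∧ ∀ t ∈ Set.Icc a b, ‖A t i j‖ ≤ C := by
    intro i j
    obtain ⟨C, hC⟩ := isCompact_Icc.exists_bound_of_continuousOn (hA i j)
    exact ⟨C, le_trans (norm_nonneg _) (hC a ⟨le_rfl, hab.le⟩), hC⟩
  choose C hC0 hC using hbd
  set Cb : ℝ := ∑ i, ∑ j, C i j with hCb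
  have hCb0 : 0 ≤ Cb := Finset.sum_nonneg fun i _ => Finset.sum_nonneg fun j _ => hC0 i j
  set K : NNReal := ⟨Cb, hCb0⟩ with hK
  set v : ℝ → (Fin m → ℂ) → (Fin m → ℂ) := fun t x => -(A (cl t)).mulVec x with hv
  have hlip : ∀ t, LipschitzOnWith K (v t) Set.univ := by
    intro t
    apply LipschitzWith.lipschitzOnWith
    apply LipschitzWith.of_dist_le_mul
    intro x y
    rw [dist_eq_norm, dist_eq_norm]
    have he : v t x - v t y = -(A (cl t)).mulVec (x - y) := by
      simp only [hv]
      rw [Matrix.mulVec_sub]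
      abel
    rw [he, norm_neg]
    calc ‖(A (cl t)).mulVec (x - y)‖ ≤ (∑ i, ∑ j, ‖A (cl t) i j‖) * ‖x - y‖ :=
          mulVec_norm_le _ _
      _ ≤ Cb * ‖x - y‖ := by
          apply mul_le_mul_of_nonneg_right _ (norm_nonneg _)
          exact Finset.sum_le_sum fun i _ => Finset.sum_le_sum fun j _ =>
            hC i j _ (hclmem t)
      _ = (K : ℝ) * ‖x - y‖ := rfl
  have hzc : ContinuousOn z (Set.Icc a b) := fun t ht => (hz t ht).continuousWithinAt
  have hvz : ∀ t ∈ Set.Icc a b, v t (z t) = -(A t).mulVec (z t) := by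
    intro t ht; simp only [hv, hcleq t ht]
  have hv0 : ∀ t, v t 0 = 0 := by
    intro t; simp only [hv, Matrix.mulVec_zero, neg_zero]
  -- right of t₁
  have hright : Set.EqOn z (fun _ => (0 : Fin m → ℂ)) (Set.Icc t₁ b) := by
    apply ODE_solution_unique_of_mem_Icc_right (fun t _ => hlip t)
      (hzc.mono (Set.Icc_subset_Icc_left ht₁.1))
    · intro t ht
      have htS : t ∈ Set.Icc a b := ⟨le_trans ht₁.1 ht.1, ht.2.le⟩
      have h2 := (hz t htS).mono_of_mem_nhdsWithin (Icc_mem_nhdsGE_of_mem ⟨htS.1, ht.2⟩)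
      rwa [← hvz t htS] at h2
    · exact fun t _ => Set.mem_univ _
    · exact continuousOn_const
    · intro t ht
      rw [hv0 t]
      exact hasDerivWithinAt_const _ _ _
    · exact fun t _ => Set.mem_univ _
    · exact hz1
  -- left of t₁
  have hleft : Set.EqOn z (fun _ => (0 : Fin m → ℂ)) (Set.Icc a t₁) := by
    apply ODE_solution_unique_of_mem_Icc_left (fun t _ => hlip t)
      (hzc.mono (Set.Icc_subset_Icc_right ht₁.2))
    · intro t ht
      have htS : t ∈ Set.Icc a b := ⟨ht.1.le, le_trans ht.2 ht₁.2⟩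
      have h2 := (hz t htS).mono_of_mem_nhdsWithin (Icc_mem_nhdsLE_of_mem ⟨ht.1, htS.2⟩)
      rwa [← hvz t htS] at h2
    · exact fun t _ => Set.mem_univ _
    · exact continuousOn_const
    · intro t ht
      rw [hv0 t]
      exact hasDerivWithinAt_const _ _ _
    · exact fun t _ => Set.mem_univ _
    · exact hz1
  intro t ht
  rcases le_total t t₁ with h | h
  · exact hleft ⟨ht.1, h⟩
  · exact hright ⟨h, ht.2⟩
lemma hasDerivWithinAt_sum_mul {m : ℕ} {Y : ℝ → Matrix (Fin m) (Fin m) ℂ}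
    {Y' : Matrix (Fin m) (Fin m) ℂ} {u : ℝ → Fin m → ℂ} {u' : Fin m → ℂ}
    {S : Set ℝ} {t : ℝ} (j : Fin m)
    (hY : ∀ k, HasDerivWithinAt (fun s => Y s j k) (Y' j k) S t)
    (hu : ∀ k, HasDerivWithinAt (fun s => u s k) (u' k) S t) :
    HasDerivWithinAt (fun s => ∑ k, Y s j k * u s k)
      (∑ k, (Y' j k * u t k + Y t j k * u' k)) S t :=
  HasDerivWithinAt.fun_sum fun k _ => (hY k).mul (hu k)

lemma mulVec_sum_identity {m : ℕ} (A Y : Matrix (Fin m) (Fin m) ℂ) (c : Fin m → ℂ) (j : Fin m) :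
    ∑ k, ((A * Y) j k) * c k = A.mulVec (fun r => ∑ k, Y r k * c k) j := by
  simp only [Matrix.mul_apply, Matrix.mulVec, dotProduct, Finset.sum_mul,
    Finset.mul_sum, mul_assoc]
  rw [Finset.sum_comm]
lemma sol_eq_matriciant {m : ℕ} (hab : a < b)
    {A Y : ℝ → Matrix (Fin m) (Fin m) ℂ}
    (hA : ∀ i j, ContinuousOn (fun t => A t i j) (Set.Icc a b))
    (hYd : ∀ i j, DifferentiableOn ℝ (fun t => Y t i j) (Set.Icc a b))
    (hYode : ∀ t ∈ Set.Icc a b, ∀ i j,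
      derivWithin (fun s => Y s i j) (Set.Icc a b) t = -((A t * Y t) i j))
    {t₀ : ℝ} (ht₀ : t₀ ∈ Set.Icc a b) (hYinit : Y t₀ = 1)
    {z : ℝ → Fin m → ℂ}
    (hzd : ∀ j, DifferentiableOn ℝ (fun t => z t j) (Set.Icc a b))
    (hzode : ∀ t ∈ Set.Icc a b, ∀ i,
      derivWithin (fun s => z s i) (Set.Icc a b) t = -((A t).mulVec (z t) i)) :
    ∀ t ∈ Set.Icc a b, ∀ j, z t j = ∑ k, Y t j k * z t₀ k := by
  have hU : UniqueDiffOn ℝ (Set.Icc a b) := uniqueDiffOn_Icc hab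
  set c : Fin m → ℂ := z t₀ with hc
  set w : ℝ → Fin m → ℂ := fun t j => z t j - ∑ k, Y t j k * c k with hw
  have hwd : ∀ t ∈ Set.Icc a b, HasDerivWithinAt w (-(A t).mulVec (w t)) (Set.Icc a b) t := by
    intro t ht
    apply hasDerivWithinAt_pi.2
    intro j
    have hz' : HasDerivWithinAt (fun s => z s j) (-((A t).mulVec (z t) j)) (Set.Icc a b) t := by
      have := ((hzd j) t ht).hasDerivWithinAt
      rwa [hzode t ht j] at this
    have hY' : HasDerivWithinAt (fun s => ∑ k, Y s j k * c k)
        (∑ k, (-((A t * Y t) j k) * c k + Y t j k * 0)) (Set.Icc a b) t := by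
      apply hasDerivWithinAt_sum_mul (Y' := fun j k => -((A t * Y t) j k)) j
      · intro k
        have := ((hYd j k) t ht).hasDerivWithinAt
        rwa [hYode t ht j k] at this
      · intro k
        exact hasDerivWithinAt_const _ _ _
    have hcombined := hz'.fun_sub hY'
    convert hcombined using 1
    simp only [mul_zero, add_zero, neg_mul]
    rw [show (-(A t).mulVec (w t)) j = -((A t).mulVec (w t) j) from rfl]
    have hwt : w t = fun r => z t r - ∑ k, Y t r k * c k := rfl
    have hsplit : (A t).mulVec (w t) j
        = (A t).mulVec (z t) j - (A t).mulVec (fun r => ∑ k, Y t r k * c k) j := by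
      rw [show w t = z t - fun r => ∑ k, Y t r k * c k from rfl, Matrix.mulVec_sub]
      rfl
    rw [hsplit, ← mulVec_sum_identity (A t) (Y t) c j]
    rw [neg_sub, Finset.sum_neg_distrib]
    ring
  have hzero := ode_unique hab hA hwd ht₀ ?_
  · intro t ht j
    have := congrFun (hzero t ht) j
    simpa [hw, sub_eq_zero] using this
  · funext j
    simp only [hw, hYinit, Matrix.one_apply]
    simp [ite_mul, Finset.sum_ite_eq, hc]
lemma matriciant_det_ne_zero {m : ℕ} (hab : a < b)
    {A Y : ℝ → Matrix (Fin m) (Fin m) ℂ}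
    (hA : ∀ i j, ContinuousOn (fun t => A t i j) (Set.Icc a b))
    (hYd : ∀ i j, DifferentiableOn ℝ (fun t => Y t i j) (Set.Icc a b))
    (hYode : ∀ t ∈ Set.Icc a b, ∀ i j,
      derivWithin (fun s => Y s i j) (Set.Icc a b) t = -((A t * Y t) i j))
    {t₀ : ℝ} (ht₀ : t₀ ∈ Set.Icc a b) (hYinit : Y t₀ = 1) :
    ∀ t ∈ Set.Icc a b, (Y t).det ≠ 0 := by
  intro t₁ ht₁ hdet
  obtain ⟨v, hv0, hveq⟩ := (Matrix.exists_mulVec_eq_zero_iff).2 hdet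
  set z : ℝ → Fin m → ℂ := fun t j => ∑ k, Y t j k * v k with hz
  have hzveq : ∀ t, z t = (Y t).mulVec v := by
    intro t; funext j; simp [hz, Matrix.mulVec, dotProduct]
  have hzd : ∀ t ∈ Set.Icc a b, HasDerivWithinAt z (-(A t).mulVec (z t)) (Set.Icc a b) t := by
    intro t ht
    apply hasDerivWithinAt_pi.2
    intro j
    have hY' : HasDerivWithinAt (fun s => ∑ k, Y s j k * v k)
        (∑ k, (-((A t * Y t) j k) * v k + Y t j k * 0)) (Set.Icc a b) t := by
      apply hasDerivWithinAt_sum_mul (Y' := fun j k => -((A t * Y t) j k)) j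
      · intro k
        have := ((hYd j k) t ht).hasDerivWithinAt
        rwa [hYode t ht j k] at this
      · intro k
        exact hasDerivWithinAt_const _ _ _
    convert hY' using 1
    · rfl
    simp only [mul_zero, add_zero, neg_mul]
    rw [show (-(A t).mulVec (z t)) j = -((A t).mulVec (z t) j) from rfl]
    rw [show (A t).mulVec (z t) j = (A t).mulVec (fun r => ∑ k, Y t r k * v k) j from rfl]
    rw [← mulVec_sum_identity (A t) (Y t) v j, Finset.sum_neg_distrib]
  have hzero := ode_unique hab hA hzd ht₁ (by rw [show z t₁ = (Y t₁).mulVec v from hzveq t₁]; exact hveq)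
  apply hv0
  have := hzero t₀ ht₀
  rw [hzveq t₀, hYinit, Matrix.one_mulVec] at this
  exact this
lemma Ycol_hasDeriv {m : ℕ} {A Y : ℝ → Matrix (Fin m) (Fin m) ℂ}
    (hYd : ∀ i j, DifferentiableOn ℝ (fun t => Y t i j) (Set.Icc a b))
    (hYode : ∀ t ∈ Set.Icc a b, ∀ i j,
      derivWithin (fun s => Y s i j) (Set.Icc a b) t = -((A t * Y t) i j))
    (c : Fin m → ℂ) {t : ℝ} (ht : t ∈ Set.Icc a b) (j : Fin m) :
    HasDerivWithinAt (fun s => ∑ k, Y s j k * c k)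
      (-((A t).mulVec (fun r => ∑ k, Y t r k * c k) j)) (Set.Icc a b) t := by
  have hY' : HasDerivWithinAt (fun s => ∑ k, Y s j k * c k)
      (∑ k, (-((A t * Y t) j k) * c k + Y t j k * 0)) (Set.Icc a b) t := by
    apply hasDerivWithinAt_sum_mul (Y' := fun j k => -((A t * Y t) j k)) j
    · intro k
      have := ((hYd j k) t ht).hasDerivWithinAt
      rwa [hYode t ht j k] at this
    · intro k; exact hasDerivWithinAt_const _ _ _
  convert hY' using 1
  simp only [mul_zero, add_zero, neg_mul]
  rw [← mulVec_sum_identity (A t) (Y t) c j, Finset.sum_neg_distrib]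

end Helpers

/-- Theorem 3.4: with `Y` the matriciant of the system relative to `t₀`
(`Y' = -AY`, `Y(t₀) = I_m`) and `[BY]` the numerical matrix obtained by applying `B` to the
columns of `Y`, the operator `(L,B)` is invertible (i.e. the problem `Ly = f`, `By = q` is
uniquely solvable for all data) if and only if `det [BY] ≠ 0`. -/
theorem statement3 (a b : ℝ) (hab : a < b) (n m : ℕ) (hm : 1 ≤ m)
    (α : ℝ) (hα0 : 0 ≤ α) (hα1 : α ≤ 1)
    (A : ℝ → Matrix (Fin m) (Fin m) ℂ) (hA : InHolderM a b n α A)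
    (B : (ℝ → Fin m → ℂ) →ₗ[ℂ] (Fin m → ℂ))
    (hB : ∃ K : ℝ, ∀ y : ℝ → Fin m → ℂ, InHolderV a b (n + 1) α y →
      ‖B y‖ ≤ K * holderNormV a b (n + 1) α y)
    (t₀ : ℝ) (ht₀ : t₀ ∈ Set.Icc a b)
    (Y : ℝ → Matrix (Fin m) (Fin m) ℂ) (hY : InHolderM a b (n + 1) α Y)
    (hYode : ∀ t ∈ Set.Icc a b, ∀ i j,
      derivWithin (fun s => Y s i j) (Set.Icc a b) t = -((A t * Y t) i j))
    (hYinit : Y t₀ = 1) :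
    (∀ f : ℝ → Fin m → ℂ, ∀ q : Fin m → ℂ, InHolderV a b n α f →
      ∃ y : ℝ → Fin m → ℂ, InHolderV a b (n + 1) α y ∧ SolvesV a b A y f ∧ B y = q ∧
        ∀ y' : ℝ → Fin m → ℂ, InHolderV a b (n + 1) α y' → SolvesV a b A y' f → B y' = q →
          Set.EqOn y' y (Set.Icc a b)) ↔
    Matrix.det (Matrix.of fun i k => B (fun t j => Y t j k) i) ≠ 0 := by
  have hU : UniqueDiffOn ℝ (Set.Icc a b) := uniqueDiffOn_Icc hab
  set M : Matrix (Fin m) (Fin m) ℂ := Matrix.of fun i k => B (fun t j => Y t j k) i with hM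
  have hAc : ∀ i j, ContinuousOn (fun t => A t i j) (Set.Icc a b) :=
    fun i j => (hA i j).1.continuousOn
  have hYd : ∀ i j, DifferentiableOn ℝ (fun t => Y t i j) (Set.Icc a b) :=
    fun i j => (hY i j).1.differentiableOn (by simp)
  -- B of a column combination
  have hBcol : ∀ c : Fin m → ℂ, B (fun t j => ∑ k, Y t j k * c k) = M.mulVec c := by
    intro c
    have he : (fun t j => ∑ k, Y t j k * c k)
        = ∑ k : Fin m, c k • (fun t j => Y t j k) := by
      funext t j
      rw [Finset.sum_apply, Finset.sum_apply]
      apply Finset.sum_congr rfl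
      intro k _
      simp [mul_comm]
    rw [he, map_sum]
    funext i
    rw [Finset.sum_apply]
    simp only [map_smul, Pi.smul_apply, smul_eq_mul]
    simp only [Matrix.mulVec, dotProduct, hM, Matrix.of_apply]
    apply Finset.sum_congr rfl
    intro k _
    ring
  -- columns of Y are (n+1)-Hölder
  have hYcolH : ∀ c : Fin m → ℂ, InHolderV a b (n + 1) α (fun t j => ∑ k, Y t j k * c k) := by
    intro c j
    exact InHolder.finset_sum hab hα0 hα1 _ _ fun k _ =>
      InHolder.mul hab hα0 hα1 (hY j k) (InHolder.const hab hα0 hα1 (c k))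
  constructor
  · -- solvability → det ≠ 0
    intro hsolv hdet
    obtain ⟨v, hv0, hveq⟩ := Matrix.exists_mulVec_eq_zero_iff.2 hdet
    have hf0 : InHolderV a b n α (fun _ (_ : Fin m) => (0:ℂ)) :=
      fun i => InHolder.const hab hα0 hα1 0
    obtain ⟨y, hyH, hysol, hyB, huniq⟩ := hsolv (fun _ _ => 0) 0 hf0
    set y1 : ℝ → Fin m → ℂ := fun t j => ∑ k, Y t j k * v k with hy1
    have hy1H : InHolderV a b (n + 1) α y1 := hYcolH v
    have hy1sol : SolvesV a b A y1 (fun _ _ => 0) := by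
      intro t ht i
      have hd := Ycol_hasDeriv hYd hYode v ht i
      have := hd.derivWithin (hU t ht)
      simp only [Lop, hy1]
      rw [this]
      have : (A t).mulVec (y1 t) i = (A t).mulVec (fun r => ∑ k, Y t r k * v k) i := rfl
      rw [this]
      ring
    have hy1B : B y1 = 0 := by rw [hy1, hBcol v, hveq]
    have hy2H : InHolderV a b (n + 1) α (fun (_ : ℝ) (_ : Fin m) => (0:ℂ)) :=
      fun i => InHolder.const hab hα0 hα1 0
    have hy2sol : SolvesV a b A (fun (_ : ℝ) (_ : Fin m) => (0:ℂ)) (fun _ _ => 0) := by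
      intro t ht i
      simp only [Lop]
      rw [derivWithin_fun_const, Pi.zero_apply]
      have : (A t).mulVec (fun _ => (0:ℂ)) i = 0 := by
        rw [show (fun _ : Fin m => (0:ℂ)) = (0 : Fin m → ℂ) from rfl, Matrix.mulVec_zero]
        rfl
      rw [this]; ring
    have hy2B : B (fun (_ : ℝ) (_ : Fin m) => (0:ℂ)) = 0 := by
      rw [show (fun _ : ℝ => fun _ : Fin m => (0:ℂ)) = (0 : ℝ → Fin m → ℂ) from rfl, map_zero]
    have heq1 := huniq y1 hy1H hy1sol hy1B
    have heq2 := huniq (fun _ _ => 0) hy2H hy2sol hy2B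
    have hvz : v = 0 := by
      funext j
      have h1 := congrFun (heq1 ht₀) j
      have h2 := congrFun (heq2 ht₀) j
      simp only [hy1, hYinit, Matrix.one_apply, ite_mul, one_mul, zero_mul,
        Finset.sum_ite_eq] at h1
      simp only [Finset.mem_univ, if_pos] at h1
      rw [← h2] at h1
      exact h1
    exact hv0 hvz
  · -- det ≠ 0 → solvability
    intro hdet f q hf
    have hunit : IsUnit M.det := isUnit_iff_ne_zero.2 hdet
    have hdetY : ∀ t ∈ Set.Icc a b, (Y t).det ≠ 0 :=
      matriciant_det_ne_zero hab hAc hYd hYode ht₀ hYinit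
    have hYunit : ∀ t ∈ Set.Icc a b, IsUnit (Y t).det := fun t ht =>
      isUnit_iff_ne_zero.2 (hdetY t ht)
    have hYn : ∀ i j, InHolder a b n α (fun t => Y t i j) := fun i j =>
      (hY i j).down hab hα0 hα1
    have hdetH : InHolder a b n α (fun t => (Y t).det) := inHolder_det hab hα0 hα1 hYn
    have hdetinv : InHolder a b n α (fun t => ((Y t).det)⁻¹) :=
      InHolder.inv hab hα0 hα1 hdetH hdetY
    have hZ : ∀ i j, InHolder a b n α (fun t => (Y t)⁻¹ i j) := by
      intro i j
      have he : (fun t => (Y t)⁻¹ i j) = fun t => ((Y t).det)⁻¹ * (Y t).adjugate i j := by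
        funext t
        rw [Matrix.inv_def]
        simp [Ring.inverse_eq_inv', Matrix.smul_apply, smul_eq_mul]
      rw [he]
      exact InHolder.mul hab hα0 hα1 hdetinv (inHolder_adjugate hab hα0 hα1 hYn i j)
    set g : ℝ → Fin m → ℂ := fun t k => ∑ j, (Y t)⁻¹ k j * f t j with hg
    have hgH : ∀ k, InHolder a b n α (fun t => g t k) := fun k =>
      InHolder.finset_sum hab hα0 hα1 _ _ fun j _ => InHolder.mul hab hα0 hα1 (hZ k j) (hf j)
    have hgc : ∀ k, ContinuousOn (fun t => g t k) (Set.Icc a b) := fun k =>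
      (hgH k).1.continuousOn
    set cl : ℝ → ℝ := fun t => max a (min t b) with hcl
    have hclc : Continuous cl := continuous_const.max (continuous_id.min continuous_const)
    have hclmem : ∀ t, cl t ∈ Set.Icc a b := fun t =>
      ⟨le_max_left _ _, max_le hab.le (min_le_right _ _)⟩
    have hcleq : ∀ t ∈ Set.Icc a b, cl t = t := fun t ht => by
      simp only [hcl]; rw [min_eq_left ht.2, max_eq_right ht.1]
    set G : Fin m → ℝ → ℂ := fun k t => ∫ s in t₀..t, g (cl s) k with hG
    have hgtc : ∀ k, Continuous (fun s => g (cl s) k) := fun k =>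
      (hgc k).comp_continuous hclc hclmem
    have hGdS : ∀ k, ∀ t ∈ Set.Icc a b, HasDerivWithinAt (G k) (g t k) (Set.Icc a b) t := by
      intro k t ht
      have h1 := ((hgtc k).integral_hasStrictDerivAt t₀ t).hasDerivAt.hasDerivWithinAt
        (s := Set.Icc a b)
      rwa [hcleq t ht] at h1
    have hGH : ∀ k, InHolder a b (n + 1) α (G k) := fun k =>
      inHolder_antideriv hab (hGdS k) (hgH k)
    set y₀ : ℝ → Fin m → ℂ := fun t j => ∑ k, Y t j k * G k t with hy₀
    set c : Fin m → ℂ := M⁻¹.mulVec (q - B y₀) with hc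
    have hMc : M.mulVec c = q - B y₀ := by
      rw [hc, Matrix.mulVec_mulVec, Matrix.mul_nonsing_inv _ hunit, Matrix.one_mulVec]
    set y : ℝ → Fin m → ℂ := fun t j => ∑ k, Y t j k * (c k + G k t) with hy
    have hyH : InHolderV a b (n + 1) α y := by
      intro j
      exact InHolder.finset_sum hab hα0 hα1 _ _ fun k _ =>
        InHolder.mul hab hα0 hα1 (hY j k)
          ((InHolder.const hab hα0 hα1 (c k)).add hab (hGH k))
    have hsplit : y = (fun t j => ∑ k, Y t j k * c k) + y₀ := by
      funext t j
      simp only [hy, hy₀, Pi.add_apply]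
      rw [← Finset.sum_add_distrib]
      apply Finset.sum_congr rfl
      intro k _
      ring
    have hyB : B y = q := by
      rw [hsplit, map_add, hBcol c, hMc]
      funext i
      simp
    have hyd : ∀ t ∈ Set.Icc a b, ∀ j, HasDerivWithinAt (fun s => y s j)
        (∑ k, (-((A t * Y t) j k) * (c k + G k t) + Y t j k * g t k)) (Set.Icc a b) t := by
      intro t ht j
      apply hasDerivWithinAt_sum_mul (u := fun s k => c k + G k s) (u' := g t)
        (Y' := fun j k => -((A t * Y t) j k)) j
      · intro k
        have := ((hYd j k) t ht).hasDerivWithinAt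
        rwa [hYode t ht j k] at this
      · intro k
        exact (hGdS k t ht).const_add (c k)
    have hYZf : ∀ t ∈ Set.Icc a b, ∀ i, (∑ k, Y t i k * g t k) = f t i := by
      intro t ht i
      have h1 : (∑ k, Y t i k * g t k) = (Y t).mulVec ((Y t)⁻¹.mulVec (f t)) i := by
        simp [Matrix.mulVec, dotProduct, hg]
      rw [h1, Matrix.mulVec_mulVec, Matrix.mul_nonsing_inv _ (hYunit t ht), Matrix.one_mulVec]
    have hysol : SolvesV a b A y f := by
      intro t ht i
      have hd := (hyd t ht i).derivWithin (hU t ht)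
      simp only [Lop]
      rw [hd, Finset.sum_add_distrib, hYZf t ht i]
      have h2 : (∑ k, -((A t * Y t) i k) * (c k + G k t)) = -((A t).mulVec (y t) i) := by
        have h3 := mulVec_sum_identity (A t) (Y t) (fun k => c k + G k t) i
        rw [show (A t).mulVec (y t) i
          = (A t).mulVec (fun r => ∑ k, Y t r k * (c k + G k t)) i from rfl, ← h3,
          ← Finset.sum_neg_distrib]
        apply Finset.sum_congr rfl
        intro k _
        ring
      rw [h2]
      ring
    refine ⟨y, hyH, hysol, hyB, ?_⟩
    intro y' hy'H hy'sol hy'B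
    have hdiff1 : ∀ j, DifferentiableOn ℝ (fun t => y' t j) (Set.Icc a b) := fun j =>
      (hy'H j).1.differentiableOn (by simp)
    have hdiff2 : ∀ j, DifferentiableOn ℝ (fun t => y t j) (Set.Icc a b) := fun j =>
      (hyH j).1.differentiableOn (by simp)
    set w : ℝ → Fin m → ℂ := fun t j => y' t j - y t j with hw
    have hwdiff : ∀ j, DifferentiableOn ℝ (fun t => w t j) (Set.Icc a b) := fun j =>
      (hdiff1 j).sub (hdiff2 j)
    have hwode : ∀ t ∈ Set.Icc a b, ∀ i,
        derivWithin (fun s => w s i) (Set.Icc a b) t = -((A t).mulVec (w t) i) := by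
      intro t ht i
      have hsub := derivWithin_fun_sub (hdiff1 i t ht) (hdiff2 i t ht)
      have e1 : derivWithin (fun s => y' s i) (Set.Icc a b) t
          = f t i - (A t).mulVec (y' t) i := by
        have h := hy'sol t ht i
        simp only [Lop] at h
        exact eq_sub_of_add_eq h
      have e2 : derivWithin (fun s => y s i) (Set.Icc a b) t
          = f t i - (A t).mulVec (y t) i := by
        have h := hysol t ht i
        simp only [Lop] at h
        exact eq_sub_of_add_eq h
      rw [show (fun s => w s i) = fun s => y' s i - y s i from rfl, hsub, e1, e2,
        show w t = y' t - y t from rfl, Matrix.mulVec_sub]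
      simp only [Pi.sub_apply]
      ring
    have hweq := sol_eq_matriciant hab hAc hYd hYode ht₀ hYinit hwdiff hwode
    set c₀ : Fin m → ℂ := w t₀ with hc₀
    set r : ℝ → Fin m → ℂ := fun t j => w t j - ∑ k, Y t j k * c₀ k with hr
    have hrH : InHolderV a b (n + 1) α r := fun j =>
      InHolder.sub hab (InHolder.sub hab (hy'H j) (hyH j)) (hYcolH c₀ j)
    have hrvanish : ∀ t ∈ Set.Icc a b, ∀ j, r t j = 0 := by
      intro t ht j
      simp only [hr]
      rw [hweq t ht j]
      ring
    obtain ⟨K, hK⟩ := hB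
    have hrB : B r = 0 := by
      have h1 := hK r hrH
      have h2 : holderNormV a b (n + 1) α r = 0 := by
        apply Finset.sum_eq_zero
        intro j _
        exact holderNorm_of_vanishing hab fun t ht => hrvanish t ht j
      rw [h2, mul_zero] at h1
      exact norm_le_zero_iff.1 h1
    have hwB : B w = 0 := by
      rw [show w = y' - y from rfl, map_sub, hy'B, hyB, sub_self]
    have hcolB : B (fun t j => ∑ k, Y t j k * c₀ k) = 0 := by
      have he : (fun t j => ∑ k, Y t j k * c₀ k) = w - r := by
        funext t j
        simp only [hr, Pi.sub_apply]
        ring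
      rw [he, map_sub, hwB, hrB, sub_zero]
    have hc₀0 : c₀ = 0 := by
      have h1 : M.mulVec c₀ = 0 := by rw [← hBcol c₀]; exact hcolB
      have h2 := congrArg (fun x => M⁻¹.mulVec x) h1
      simpa [Matrix.mulVec_mulVec, Matrix.nonsing_inv_mul _ hunit, Matrix.one_mulVec,
        Matrix.mulVec_zero] using h2
    intro t ht
    funext j
    have h3 := hweq t ht j
    rw [hc₀0] at h3
    simp only [Pi.zero_apply, mul_zero, Finset.sum_const_zero] at h3
    exact sub_eq_zero.1 h3
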